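/- For any d ≥ 1, the number of unordered pairs {u, v} of distinct nonzero vectors of F_2^n, each of even Hamming weight, such that |supp(u) ∪ supp(v)| ≤ d, is at most (1/8)·Σ_{t=1}^{d} C(n,t)·(3^t + 1), where C(n,t) denotes the binomial coefficient n choose t. -/

import Mathlib

/-- The support of a vector in `F_2^n`: the set of coordinates where it is nonzero. -/
def supp {n : ℕ} (u : Fin n → ZMod 2) : Finset (Fin n) :=
  Finset.univ.filter fun i => u i ≠ 0

namespace CPAux
open Finset

abbrev K := ZMod 2 × ZMod 2

variable {n : ℕ}

def NF (n : ℕ) (g : K) (S : Finset (Fin n)) : Finset (Fin n → K) :=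
  univ.filter fun w => (∀ i, w i ≠ 0 ↔ i ∈ S) ∧ ∑ i, w i = g

lemma NF_empty (g : K) : (NF n g ∅).card = if g = 0 then 1 else 0 := by
  have key : ∀ w, w ∈ NF n g ∅ ↔ (w = 0 ∧ g = 0) := by
    intro w
    rw [NF, mem_filter]
    constructor
    · rintro ⟨-, h1, h2⟩
      have hw : w = 0 := by
        funext i
        by_contra hi
        exact absurd ((h1 i).mp hi) (notMem_empty i)
      subst hw
      simp only [Pi.zero_apply, Finset.sum_const_zero] at h2
      exact ⟨rfl, h2.symm⟩
    · rintro ⟨rfl, rfl⟩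
      exact ⟨mem_univ _, fun i => by simp, by simp⟩
  split_ifs with hg
  · subst hg
    have : NF n 0 ∅ = {0} := by
      ext w; rw [key, mem_singleton, and_iff_left rfl]
    simp [this]
  · have : NF n g ∅ = ∅ := by
      ext w
      rw [key]
      simp only [notMem_empty, iff_false, not_and]
      exact fun _ => hg
    simp [this]

lemma NF_filter_card (g c : K) (hc : c ≠ 0) {a : Fin n} {S : Finset (Fin n)} (ha : a ∉ S) :
    ((NF n g (insert a S)).filter (fun w => w a = c)).card = (NF n (g + c) S).card := by
  have hneg : ∀ x : K, x + x = 0 := by decide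
  refine Finset.card_bij' (fun w _ => Function.update w a 0)
    (fun w _ => Function.update w a c) ?_ ?_ ?_ ?_
  · intro w hw
    simp only [mem_filter, NF, mem_univ, true_and] at hw ⊢
    obtain ⟨⟨h1, h2⟩, h3⟩ := hw
    refine ⟨fun i => ?_, ?_⟩
    · rcases eq_or_ne i a with rfl | hia
      · simp [ha]
      · rw [Function.update_of_ne hia]
        rw [h1 i, mem_insert]
        exact or_iff_right hia
    · rw [Finset.sum_update_of_mem (mem_univ a)]
      have hs : ∑ i ∈ univ \ {a}, w i = ∑ i, w i - w a := by
        rw [eq_sub_iff_add_eq, sdiff_singleton_eq_erase, Finset.sum_erase_add _ _ (mem_univ a)]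
      rw [hs, h2, h3]
      rw [sub_eq_add_neg, neg_eq_of_add_eq_zero_left (hneg c)]
      abel
  · intro w hw
    simp only [mem_filter, NF, mem_univ, true_and] at hw ⊢
    obtain ⟨h1, h2⟩ := hw
    have haz : w a = 0 := by
      by_contra h
      exact ha ((h1 a).mp h)
    refine ⟨⟨fun i => ?_, ?_⟩, by simp⟩
    · rcases eq_or_ne i a with rfl | hia
      · simp [hc]
      · rw [Function.update_of_ne hia, h1 i, mem_insert]
        exact (or_iff_right hia).symm
    · rw [Finset.sum_update_of_mem (mem_univ a)]
      have hs : ∑ i ∈ univ \ {a}, w i = ∑ i, w i - w a := by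
        rw [eq_sub_iff_add_eq, sdiff_singleton_eq_erase, Finset.sum_erase_add _ _ (mem_univ a)]
      rw [hs, h2, haz, sub_zero, add_comm, add_assoc, hneg c, add_zero]
  · intro w hw
    simp only [mem_filter] at hw
    funext i
    rcases eq_or_ne i a with rfl | hia
    · simp [hw.2]
    · simp [Function.update_of_ne hia]
  · intro w hw
    simp only [NF, mem_filter, mem_univ, true_and] at hw
    have haz : w a = 0 := by
      by_contra h
      exact ha ((hw.1 a).mp h)
    funext i
    rcases eq_or_ne i a with rfl | hia
    · simp [haz]
    · simp [Function.update_of_ne hia]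

lemma NF_insert (g : K) {a : Fin n} {S : Finset (Fin n)} (ha : a ∉ S) :
    (NF n g (insert a S)).card =
      (NF n (g + (1, 0)) S).card + (NF n (g + (0, 1)) S).card + (NF n (g + (1, 1)) S).card := by
  have hmem : ∀ x : K, x ≠ 0 → x ∈ ({(1,0),(0,1),(1,1)} : Finset K) := by decide
  have hmaps : ∀ w ∈ NF n g (insert a S), w a ∈ ({(1,0),(0,1),(1,1)} : Finset K) := by
    intro w hw
    simp only [NF, mem_filter, mem_univ, true_and] at hw
    exact hmem _ ((hw.1 a).mpr (mem_insert_self a S))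
  rw [Finset.card_eq_sum_card_fiberwise hmaps]
  rw [show ({(1,0),(0,1),(1,1)} : Finset K) = insert (1,0) (insert (0,1) {(1,1)}) from rfl]
  rw [Finset.sum_insert (by decide), Finset.sum_insert (by decide), Finset.sum_singleton]
  rw [NF_filter_card g (1,0) (by decide) ha, NF_filter_card g (0,1) (by decide) ha,
    NF_filter_card g (1,1) (by decide) ha]
  ring

lemma NF_card (S : Finset (Fin n)) :
    if Even S.card
    then 4 * (NF n 0 S).card = 3 ^ S.card + 3 ∧
      ∀ g : K, g ≠ 0 → 4 * (NF n g S).card + 1 = 3 ^ S.card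
    else 4 * (NF n 0 S).card + 3 = 3 ^ S.card ∧
      ∀ g : K, g ≠ 0 → 4 * (NF n g S).card = 3 ^ S.card + 1 := by
  induction S using Finset.induction_on with
  | empty =>
    simp only [Finset.card_empty, Even.zero, if_true, pow_zero]
    constructor
    · rw [NF_empty]; simp
    · intro g hg; rw [NF_empty]; simp [hg]
  | insert _ _ ha =>
    rename_i a S ih
    have hK : ∀ x : K, x = 0 ∨ x = (1,0) ∨ x = (0,1) ∨ x = (1,1) := by decide
    rw [Finset.card_insert_of_notMem ha]
    have hpow : (3:ℕ) ^ (S.card + 1) = 3 * 3 ^ S.card := by ring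
    rcases Nat.even_or_odd S.card with he | ho
    · rw [if_pos he] at ih
      rw [if_neg (by rw [Nat.even_add_one]; exact not_not.mpr he)]
      obtain ⟨ih0, ihM⟩ := ih
      have m10 := ihM (1,0) (by decide)
      have m01 := ihM (0,1) (by decide)
      have m11 := ihM (1,1) (by decide)
      constructor
      · rw [NF_insert 0 ha]
        simp only [zero_add] at *
        omega
      · intro g hg
        rcases hK g with rfl | rfl | rfl | rfl
        · exact absurd rfl hg
        · rw [NF_insert (1,0) ha]
          rw [show ((1,0) : K) + (1,0) = 0 from by decide,
              show ((1,0) : K) + (0,1) = (1,1) from by decide,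
              show ((1,0) : K) + (1,1) = (0,1) from by decide]
          omega
        · rw [NF_insert (0,1) ha]
          rw [show ((0,1) : K) + (1,0) = (1,1) from by decide,
              show ((0,1) : K) + (0,1) = 0 from by decide,
              show ((0,1) : K) + (1,1) = (1,0) from by decide]
          omega
        · rw [NF_insert (1,1) ha]
          rw [show ((1,1) : K) + (1,0) = (0,1) from by decide,
              show ((1,1) : K) + (0,1) = (1,0) from by decide,
              show ((1,1) : K) + (1,1) = 0 from by decide]
          omega
    · have hne : ¬ Even S.card := Nat.not_even_iff_odd.mpr ho
      rw [if_neg hne] at ih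
      rw [if_pos (Nat.even_add_one.mpr hne)]
      obtain ⟨ih0, ihM⟩ := ih
      have m10 := ihM (1,0) (by decide)
      have m01 := ihM (0,1) (by decide)
      have m11 := ihM (1,1) (by decide)
      constructor
      · rw [NF_insert 0 ha]
        simp only [zero_add] at *
        omega
      · intro g hg
        rcases hK g with rfl | rfl | rfl | rfl
        · exact absurd rfl hg
        · rw [NF_insert (1,0) ha]
          rw [show ((1,0) : K) + (1,0) = 0 from by decide,
              show ((1,0) : K) + (0,1) = (1,1) from by decide,
              show ((1,0) : K) + (1,1) = (0,1) from by decide]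
          omega
        · rw [NF_insert (0,1) ha]
          rw [show ((0,1) : K) + (1,0) = (1,1) from by decide,
              show ((0,1) : K) + (0,1) = 0 from by decide,
              show ((0,1) : K) + (1,1) = (1,0) from by decide]
          omega
        · rw [NF_insert (1,1) ha]
          rw [show ((1,1) : K) + (1,0) = (0,1) from by decide,
              show ((1,1) : K) + (0,1) = (1,0) from by decide,
              show ((1,1) : K) + (1,1) = 0 from by decide]
          omega

end CPAux

namespace CPAux
open Finset

variable {n : ℕ}

lemma hammingNorm_eq_supp (u : Fin n → ZMod 2) : hammingNorm u = (supp u).card := rfl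

lemma even_iff_sum (u : Fin n → ZMod 2) : Even (hammingNorm u) ↔ ∑ i, u i = 0 := by
  have hone : ∀ x : ZMod 2, x ≠ 0 → x = 1 := by decide
  have h1 : ((hammingNorm u : ℕ) : ZMod 2) = ∑ i, u i := by
    rw [hammingNorm, Finset.card_filter, Nat.cast_sum]
    refine Finset.sum_congr rfl fun i _ => ?_
    by_cases h : u i = 0
    · simp [h]
    · simp [h, (hone _ h).symm]
  rw [← h1, ZMod.natCast_eq_zero_iff, Nat.even_iff, Nat.dvd_iff_mod_eq_zero]

def PairsF (n : ℕ) (S : Finset (Fin n)) : Finset ((Fin n → ZMod 2) × (Fin n → ZMod 2)) :=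
  univ.filter fun uv => Even (hammingNorm uv.1) ∧ Even (hammingNorm uv.2) ∧
    supp uv.1 ∪ supp uv.2 = S

lemma pairs_card (S : Finset (Fin n)) : (PairsF n S).card = (NF n 0 S).card := by
  refine Finset.card_nbij' (fun uv => fun i => (uv.1 i, uv.2 i))
    (fun w => (fun i => (w i).1, fun i => (w i).2)) ?_ ?_ ?_ ?_
  · rintro ⟨u, v⟩ huv
    simp only [Finset.mem_coe, PairsF, mem_filter, mem_univ, true_and] at huv
    obtain ⟨he1, he2, hun⟩ := huv
    simp only [Finset.mem_coe, NF, mem_filter, mem_univ, true_and]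
    constructor
    · intro i
      rw [show ((u i, v i) ≠ 0) ↔ (u i ≠ 0 ∨ v i ≠ 0) by
        rw [Ne, Prod.mk_eq_zero]; tauto]
      rw [← hun, mem_union]
      simp [supp]
    · refine Prod.ext ?_ ?_
      · rw [Prod.fst_sum]
        simpa using (even_iff_sum u).mp he1
      · rw [Prod.snd_sum]
        simpa using (even_iff_sum v).mp he2
  · intro w hw
    simp only [Finset.mem_coe, NF, mem_filter, mem_univ, true_and] at hw
    obtain ⟨h1, h2⟩ := hw
    simp only [Finset.mem_coe, PairsF, mem_filter, mem_univ, true_and]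
    refine ⟨?_, ?_, ?_⟩
    · rw [even_iff_sum, ← Prod.fst_sum, h2]; rfl
    · rw [even_iff_sum, ← Prod.snd_sum, h2]; rfl
    · ext i
      rw [mem_union, ← h1 i]
      simp only [supp, mem_filter, mem_univ, true_and]
      constructor
      · rintro (h | h) <;> intro h0 <;> rw [h0] at h <;> simp at h
      · intro hne
        by_contra hc
        push_neg at hc
        exact hne (Prod.ext hc.1 hc.2)
  · rintro ⟨u, v⟩ _
    rfl
  · intro w _
    funext i
    rfl

def OF (n : ℕ) (S : Finset (Fin n)) : Finset ((Fin n → ZMod 2) × (Fin n → ZMod 2)) :=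
  univ.filter fun uv => uv.1 ≠ uv.2 ∧ uv.1 ≠ 0 ∧ uv.2 ≠ 0 ∧
    Even (hammingNorm uv.1) ∧ Even (hammingNorm uv.2) ∧ supp uv.1 ∪ supp uv.2 = S

lemma supp_zero : supp (0 : Fin n → ZMod 2) = ∅ := by
  ext i; simp [supp]

lemma OF_bound (S : Finset (Fin n)) (hS : S.Nonempty) :
    4 * (OF n S).card + 3 ≤ 3 ^ S.card := by
  have hsub : OF n S ⊆ PairsF n S := by
    intro uv h
    simp only [OF, PairsF, mem_filter, mem_univ, true_and] at h ⊢
    tauto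
  have hcard := NF_card (n := n) S
  have hpc := pairs_card S
  rcases Nat.even_or_odd S.card with he | ho
  · -- even case: three degenerate elements
    rw [if_pos he] at hcard
    set χ : Fin n → ZMod 2 := fun i => if i ∈ S then 1 else 0 with hχ
    have hχsupp : supp χ = S := by
      ext i
      simp only [supp, mem_filter, mem_univ, true_and, hχ]
      by_cases h : i ∈ S <;> simp [h]
    have hχnorm : hammingNorm χ = S.card := by
      rw [hammingNorm_eq_supp, hχsupp]
    have hχ0 : χ ≠ 0 := by
      obtain ⟨i, hi⟩ := hS
      intro h
      have := congrFun h i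
      simp [hχ, hi] at this
    have hχeven : Even (hammingNorm χ) := by rw [hχnorm]; exact he
    have h0even : Even (hammingNorm (0 : Fin n → ZMod 2)) := by
      rw [hammingNorm_eq_supp, supp_zero]; simp
    set T : Finset ((Fin n → ZMod 2) × (Fin n → ZMod 2)) := {(χ, χ), (0, χ), (χ, 0)} with hT
    have hTsub : T ⊆ PairsF n S := by
      intro uv huv
      simp only [hT, mem_insert, mem_singleton] at huv
      rcases huv with rfl | rfl | rfl <;>
        simp [PairsF, hχeven, h0even, hχsupp, supp_zero]
    have hdisj : Disjoint (OF n S) T := by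
      rw [Finset.disjoint_left]
      intro uv h1 h2
      simp only [OF, mem_filter, mem_univ, true_and] at h1
      simp only [hT, mem_insert, mem_singleton] at h2
      rcases h2 with rfl | rfl | rfl
      · exact h1.1 rfl
      · exact h1.2.1 rfl
      · exact h1.2.2.1 rfl
    have hTcard : T.card = 3 := by
      rw [hT]
      rw [Finset.card_insert_of_notMem, Finset.card_insert_of_notMem, Finset.card_singleton]
      · simp only [mem_singleton, Prod.mk.injEq, not_and]
        intro h; exact absurd h.symm hχ0
      · simp only [mem_insert, mem_singleton, Prod.mk.injEq, not_or, not_and]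
        exact ⟨fun h => absurd h hχ0, fun _ h => absurd h hχ0⟩
    have hle : (OF n S).card + 3 ≤ (PairsF n S).card := by
      rw [← hTcard, ← Finset.card_union_of_disjoint hdisj]
      exact Finset.card_le_card (Finset.union_subset hsub hTsub)
    omega
  · rw [if_neg (Nat.not_even_iff_odd.mpr ho)] at hcard
    have hle : (OF n S).card ≤ (PairsF n S).card := Finset.card_le_card hsub
    omega

end CPAux

namespace CPAux
open Finset

def OG (n d : ℕ) : Finset ((Fin n → ZMod 2) × (Fin n → ZMod 2)) :=
  univ.filter fun uv => uv.1 ≠ uv.2 ∧ uv.1 ≠ 0 ∧ uv.2 ≠ 0 ∧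
    Even (hammingNorm uv.1) ∧ Even (hammingNorm uv.2) ∧ (supp uv.1 ∪ supp uv.2).card ≤ d

lemma OG_bound (n d : ℕ) :
    4 * (OG n d).card ≤ ∑ t ∈ Finset.Icc 1 d, n.choose t * (3 ^ t + 1) := by
  set T : Finset (Finset (Fin n)) := univ.filter fun S => S.Nonempty ∧ S.card ≤ d with hT
  have hmaps : ∀ uv ∈ OG n d, supp uv.1 ∪ supp uv.2 ∈ T := by
    intro uv h
    simp only [OG, mem_filter, mem_univ, true_and] at h
    simp only [hT, mem_filter, mem_univ, true_and]
    refine ⟨?_, h.2.2.2.2.2⟩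
    obtain ⟨i, hi⟩ : ∃ i, uv.1 i ≠ 0 := by
      by_contra hc; push_neg at hc; exact h.2.1 (funext hc)
    exact ⟨i, mem_union_left _ (by simp [supp, hi])⟩
  rw [Finset.card_eq_sum_card_fiberwise hmaps, Finset.mul_sum]
  have step1 : ∑ S ∈ T, 4 * ((OG n d).filter (fun uv => supp uv.1 ∪ supp uv.2 = S)).card
      ≤ ∑ S ∈ T, (3 ^ S.card + 1) := by
    refine Finset.sum_le_sum fun S hS => ?_
    simp only [hT, mem_filter, mem_univ, true_and] at hS
    have hsub : (OG n d).filter (fun uv => supp uv.1 ∪ supp uv.2 = S) ⊆ OF n S := by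
      intro uv h
      simp only [OG, OF, mem_filter, mem_univ, true_and] at h ⊢
      obtain ⟨⟨a, b, c, d', e, f⟩, hu⟩ := h
      exact ⟨a, b, c, d', e, hu⟩
    have hb := OF_bound S hS.1
    have hc := Finset.card_le_card hsub
    omega
  refine le_trans step1 ?_
  have hmaps2 : ∀ S ∈ T, S.card ∈ Finset.Icc 1 d := by
    intro S hS
    simp only [hT, mem_filter, mem_univ, true_and] at hS
    rw [Finset.mem_Icc]
    exact ⟨Finset.card_pos.mpr hS.1, hS.2⟩
  rw [← Finset.sum_fiberwise_of_maps_to hmaps2 (fun S => 3 ^ S.card + 1)]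
  refine le_of_eq (Finset.sum_congr rfl fun t ht => ?_)
  rw [Finset.mem_Icc] at ht
  have hfib : T.filter (fun S => S.card = t) = Finset.powersetCard t univ := by
    ext S
    simp only [hT, mem_filter, mem_univ, true_and, Finset.mem_powersetCard,
      Finset.subset_univ, true_and]
    constructor
    · rintro ⟨⟨-, -⟩, hc⟩; exact hc
    · intro hc
      exact ⟨⟨Finset.card_pos.mp (by omega), by omega⟩, hc⟩
  rw [hfib]
  have hconst : ∑ S ∈ Finset.powersetCard t (univ : Finset (Fin n)), (3 ^ S.card + 1)
      = ∑ _S ∈ Finset.powersetCard t (univ : Finset (Fin n)), (3 ^ t + 1) :=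
    Finset.sum_congr rfl fun S hS => by rw [(Finset.mem_powersetCard.mp hS).2]
  rw [hconst, Finset.sum_const, Finset.card_powersetCard, Finset.card_univ, Fintype.card_fin,
    smul_eq_mul]

end CPAux

/-- For `d ≥ 1`, the number of unordered pairs `{u, v}` of distinct nonzero
vectors of `F_2^n`, each of even Hamming weight, with `|supp(u) ∪ supp(v)| ≤ d`, is at
most `(1/8)·Σ_{t=1}^{d} C(n,t)·(3^t + 1)`, stated as: 8 times the number of such pairs
is at most `Σ_{t=1}^{d} C(n,t)·(3^t + 1)`. -/
theorem count_pairs_with_small_or (n d : ℕ) (hd : 1 ≤ d) :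
    8 * Set.ncard {p : Sym2 (Fin n → ZMod 2) |
        ∃ u v : Fin n → ZMod 2, p = s(u, v) ∧ u ≠ v ∧ u ≠ 0 ∧ v ≠ 0 ∧
          Even (hammingNorm u) ∧ Even (hammingNorm v) ∧
          (supp u ∪ supp v).card ≤ d}
      ≤ ∑ t ∈ Finset.Icc 1 d, n.choose t * (3 ^ t + 1) := by
  classical
  set PF : Finset (Sym2 (Fin n → ZMod 2)) := Finset.univ.filter (fun p =>
    ∃ u v : Fin n → ZMod 2, p = s(u, v) ∧ u ≠ v ∧ u ≠ 0 ∧ v ≠ 0 ∧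
      Even (hammingNorm u) ∧ Even (hammingNorm v) ∧ (supp u ∪ supp v).card ≤ d) with hPF
  have hset : {p : Sym2 (Fin n → ZMod 2) |
      ∃ u v : Fin n → ZMod 2, p = s(u, v) ∧ u ≠ v ∧ u ≠ 0 ∧ v ≠ 0 ∧
        Even (hammingNorm u) ∧ Even (hammingNorm v) ∧
        (supp u ∪ supp v).card ≤ d} = ↑PF := by
    ext p
    simp [hPF]
  rw [hset, Set.ncard_coe_finset]
  have h2 : 2 * PF.card ≤ (CPAux.OG n d).card := by
    have hmaps : ∀ uv ∈ CPAux.OG n d, s(uv.1, uv.2) ∈ PF := by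
      intro uv h
      simp only [CPAux.OG, Finset.mem_filter, Finset.mem_univ, true_and] at h
      simp only [hPF, Finset.mem_filter, Finset.mem_univ, true_and]
      exact ⟨uv.1, uv.2, rfl, h.1, h.2.1, h.2.2.1, h.2.2.2.1, h.2.2.2.2.1, h.2.2.2.2.2⟩
    rw [Finset.card_eq_sum_card_fiberwise hmaps]
    calc 2 * PF.card = ∑ _p ∈ PF, 2 := by rw [Finset.sum_const, smul_eq_mul, mul_comm]
      _ ≤ ∑ p ∈ PF, ((CPAux.OG n d).filter fun uv => s(uv.1, uv.2) = p).card := by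
          refine Finset.sum_le_sum fun p hp => ?_
          simp only [hPF, Finset.mem_filter, Finset.mem_univ, true_and] at hp
          obtain ⟨u, v, rfl, hne, hu0, hv0, he1, he2, hcard⟩ := hp
          have hmem1 : (u, v) ∈ (CPAux.OG n d).filter (fun uv => s(uv.1, uv.2) = s(u, v)) := by
            simp only [Finset.mem_filter, CPAux.OG, Finset.mem_univ, true_and]
            exact ⟨⟨hne, hu0, hv0, he1, he2, hcard⟩, by trivial⟩
          have hmem2 : (v, u) ∈ (CPAux.OG n d).filter (fun uv => s(uv.1, uv.2) = s(u, v)) := by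
            simp only [Finset.mem_filter, CPAux.OG, Finset.mem_univ, true_and]
            exact ⟨⟨hne.symm, hv0, hu0, he2, he1, by rwa [Finset.union_comm]⟩, Sym2.eq_swap⟩
          calc 2 = ({(u, v), (v, u)} : Finset _).card := by
                rw [Finset.card_insert_of_notMem (by
                  simp only [Finset.mem_singleton, Prod.mk.injEq]
                  rintro ⟨h, -⟩
                  exact hne h), Finset.card_singleton]
            _ ≤ _ := Finset.card_le_card (by
                rw [Finset.insert_subset_iff, Finset.singleton_subset_iff]
                exact ⟨hmem1, hmem2⟩)
  calc 8 * PF.card = 4 * (2 * PF.card) := by ring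
    _ ≤ 4 * (CPAux.OG n d).card := Nat.mul_le_mul_left 4 h2
    _ ≤ ∑ t ∈ Finset.Icc 1 d, n.choose t * (3 ^ t + 1) := CPAux.OG_bound n d
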